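/- Let i and j be even natural numbers. Then ∫_0^Ω Sn(θ)^i · Cs(θ)^j dθ = (2/l^{(i+1)/2}) · Γ((i+1)/2) · Γ((j+1)/(2l)) / Γ((i+1)/2 + (j+1)/(2l)). -/

import Mathlib

open intervalIntegral

open Set MeasureTheory Filter Topology

theorem GTaux.energy {l : ℕ} {Cs Sn : ℝ → ℝ}
    (hCs : ∀ θ : ℝ, HasDerivAt Cs (-(Sn θ)) θ)
    (hSn : ∀ θ : ℝ, HasDerivAt Sn (Cs θ ^ (2 * l - 1)) θ)
    (hCs0 : Cs 0 = 1) (hSn0 : Sn 0 = 0) (hl : 2 ≤ l) (θ : ℝ) :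
    (l : ℝ) * Sn θ ^ 2 + Cs θ ^ (2 * l) = 1 := by
  set E : ℝ → ℝ := fun θ => (l : ℝ) * Sn θ ^ 2 + Cs θ ^ (2 * l) with hE
  have key : ∀ x : ℝ, HasDerivAt E 0 x := by
    intro x
    have h1 := (((hSn x).pow 2).const_mul (l : ℝ)).add ((hCs x).pow (2 * l))
    refine h1.congr_deriv ?_
    have h2 : (2 * l - 1 : ℕ) = 2 - 1 + (2 * l - 2) := by omega
    push_cast
    rw [h2, pow_add]
    push_cast [show (2 * l - 1 : ℕ) = 2 * l - 2 + 1 by omega]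
    ring
  have hconst : ∀ x : ℝ, E x = E 0 := by
    intro x
    exact is_const_of_deriv_eq_zero (fun y => (key y).differentiableAt)
      (fun y => (key y).deriv) x 0
  have := hconst θ
  simp only [hE, hSn0, hCs0] at this ⊢
  rw [this]
  norm_num


theorem GTaux.realBeta {a b : ℝ} (ha : 0 < a) (hb : 0 < b) :
    IntervalIntegrable (fun x : ℝ => x ^ (a - 1) * (1 - x) ^ (b - 1)) volume 0 1 ∧
      ∫ x in (0 : ℝ)..1, x ^ (a - 1) * (1 - x) ^ (b - 1) =
        Real.Gamma a * Real.Gamma b / Real.Gamma (a + b) := by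
  have hC : IntervalIntegrable
      (fun x : ℝ => (x : ℂ) ^ ((a : ℂ) - 1) * (1 - (x : ℂ)) ^ ((b : ℂ) - 1)) volume 0 1 :=
    Complex.betaIntegral_convergent (by simpa using ha) (by simpa using hb)
  have heq : ∀ x ∈ Icc (0 : ℝ) 1,
      (x : ℂ) ^ ((a : ℂ) - 1) * (1 - (x : ℂ)) ^ ((b : ℂ) - 1) =
        ((x ^ (a - 1) * (1 - x) ^ (b - 1) : ℝ) : ℂ) := by
    intro x hx
    rw [Complex.ofReal_mul, Complex.ofReal_cpow hx.1, Complex.ofReal_cpow (by linarith [hx.2])]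
    push_cast
    ring
  constructor
  · rw [intervalIntegrable_iff] at hC ⊢
    have hC' : IntegrableOn (fun x : ℝ => Complex.re
        ((x : ℂ) ^ ((a : ℂ) - 1) * (1 - (x : ℂ)) ^ ((b : ℂ) - 1))) (uIoc (0:ℝ) 1) volume := hC.re
    apply hC'.congr_fun ?_ measurableSet_uIoc
    intro x hx
    rw [uIoc_of_le (zero_le_one)] at hx
    have hx' : x ∈ Icc (0:ℝ) 1 := ⟨hx.1.le, hx.2⟩
    simp only [heq x hx', Complex.ofReal_re]
  · have hbeta := Complex.Gamma_mul_Gamma_eq_betaIntegral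
      (s := (a : ℂ)) (t := (b : ℂ)) (by simpa using ha) (by simpa using hb)
    rw [Complex.betaIntegral] at hbeta
    rw [intervalIntegral.integral_congr (g := fun x : ℝ =>
      ((x ^ (a - 1) * (1 - x) ^ (b - 1) : ℝ) : ℂ)) ?_] at hbeta
    · rw [intervalIntegral.integral_ofReal] at hbeta
      rw [← Complex.ofReal_add, Complex.Gamma_ofReal, Complex.Gamma_ofReal,
        Complex.Gamma_ofReal, ← Complex.ofReal_mul, ← Complex.ofReal_mul] at hbeta
      have hreal : Real.Gamma a * Real.Gamma b =
          Real.Gamma (a + b) * ∫ x in (0:ℝ)..1, x ^ (a - 1) * (1 - x) ^ (b - 1) := by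
        exact_mod_cast hbeta
      have hG : Real.Gamma (a + b) ≠ 0 := (Real.Gamma_pos_of_pos (by linarith)).ne'
      field_simp [hG] at hreal ⊢
      linarith [hreal]
    · intro x hx
      rw [uIcc_of_le zero_le_one] at hx
      exact heq x hx


theorem GTaux.absCs {l : ℕ} {Cs Sn : ℝ → ℝ}
    (hE : ∀ θ : ℝ, (l : ℝ) * Sn θ ^ 2 + Cs θ ^ (2 * l) = 1) (hl : 2 ≤ l) (θ : ℝ) :
    |Cs θ| ≤ 1 := by
  have h1 : Cs θ ^ (2 * l) ≤ 1 := by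
    have := hE θ
    nlinarith [sq_nonneg (Sn θ), (by exact_mod_cast (by omega : 2 ≤ l) : (2:ℝ) ≤ (l:ℝ))]
  have h2 : |Cs θ| ^ (2 * l) ≤ 1 := by
    rwa [(Even.pow_abs ⟨l, by ring⟩ _ : |Cs θ| ^ (2*l) = Cs θ ^ (2*l))]
  exact (pow_le_one_iff_of_nonneg (abs_nonneg _) (by omega)).mp h2

theorem GTaux.reflect {l : ℕ} {Cs Sn : ℝ → ℝ}
    (hCs : ∀ θ : ℝ, HasDerivAt Cs (-(Sn θ)) θ)
    (hSn : ∀ θ : ℝ, HasDerivAt Sn (Cs θ ^ (2 * l - 1)) θ)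
    (hE : ∀ θ : ℝ, (l : ℝ) * Sn θ ^ 2 + Cs θ ^ (2 * l) = 1) (hl : 2 ≤ l)
    {ε : ℝ} (hε : ε = 1 ∨ ε = -1) {a : ℝ}
    (h1 : ε * Cs a = Cs a) (h2 : -(ε * Sn a) = Sn a) (θ : ℝ) :
    ε * Cs (2 * a - θ) = Cs θ ∧ -(ε * Sn (2 * a - θ)) = Sn θ := by
  have habs := GTaux.absCs hE hl
  have hεabs : |ε| = 1 := by rcases hε with h | h <;> simp [h]
  set n : ℕ := 2 * l - 1 with hn
  set v : ℝ → ℝ × ℝ → ℝ × ℝ := fun _ p => (-p.2, p.1 ^ n) with hv_def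
  set s : ℝ → Set (ℝ × ℝ) := fun _ => {p : ℝ × ℝ | |p.1| ≤ 1} with hs_def
  set K : NNReal := ((2 * l : ℕ) : NNReal) with hK
  have hK1 : (1 : ℝ) ≤ (K : ℝ) := by
    simp only [hK]
    exact_mod_cast (by omega : 1 ≤ 2 * l)
  have hpowlip : ∀ x y : ℝ, |x| ≤ 1 → |y| ≤ 1 → |x ^ n - y ^ n| ≤ n * |x - y| := by
    intro x y hx hy
    rw [← geom_sum₂_mul x y n, abs_mul]
    have hsum : |∑ i ∈ Finset.range n, x ^ i * y ^ (n - 1 - i)| ≤ n := by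
      have t1 := Finset.abs_sum_le_sum_abs (fun i => x ^ i * y ^ (n - 1 - i)) (Finset.range n)
      have t2 : ∑ i ∈ Finset.range n, |x ^ i * y ^ (n - 1 - i)| ≤
          ∑ _i ∈ Finset.range n, (1 : ℝ) := by
        apply Finset.sum_le_sum
        intro k _
        rw [abs_mul, abs_pow, abs_pow]
        exact mul_le_one₀ (pow_le_one₀ (abs_nonneg _) hx) (by positivity)
          (pow_le_one₀ (abs_nonneg _) hy)
      simp only [Finset.sum_const, Finset.card_range, nsmul_eq_mul, mul_one] at t2
      linarith
    exact mul_le_mul_of_nonneg_right hsum (abs_nonneg _)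
  have hv : ∀ t, LipschitzOnWith K (v t) (s t) := by
    intro t
    apply LipschitzOnWith.of_dist_le_mul
    intro p hp q hq
    rw [Prod.dist_eq, Prod.dist_eq]
    simp only [Real.dist_eq]
    have e1 : (v t p).1 = -p.2 := rfl
    have e2 : (v t q).1 = -q.2 := rfl
    have e3 : (v t p).2 = p.1 ^ n := rfl
    have e4 : (v t q).2 = q.1 ^ n := rfl
    have hb1 := le_max_right |p.1 - q.1| |p.2 - q.2|
    have hb2 := le_max_left |p.1 - q.1| |p.2 - q.2|
    have hnK : (n : ℝ) ≤ (K : ℝ) := by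
      have : ((2 * l - 1 : ℕ) : ℝ) ≤ ((2 * l : ℕ) : ℝ) := by
        exact_mod_cast Nat.cast_le.mpr (by omega : 2 * l - 1 ≤ 2 * l)
      simp only [hK, hn]
      rw [NNReal.coe_natCast]
      exact this
    have h3 := hpowlip p.1 q.1 hp hq
    have habs1 : |(v t p).1 - (v t q).1| = |p.2 - q.2| := by
      rw [e1, e2, abs_sub_comm]; congr 1; ring
    have habs2 : |(v t p).2 - (v t q).2| = |p.1 ^ n - q.1 ^ n| := by rw [e3, e4]
    have hmax0 : (0:ℝ) ≤ max |p.1 - q.1| |p.2 - q.2| := le_trans (abs_nonneg _) hb2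
    apply max_le
    · rw [habs1]
      nlinarith
    · rw [habs2]
      nlinarith [abs_nonneg (p.1 - q.1)]
  set f : ℝ → ℝ × ℝ := fun θ => (Cs θ, Sn θ) with hf_def
  set g : ℝ → ℝ × ℝ := fun θ => (ε * Cs (2 * a - θ), -(ε * Sn (2 * a - θ))) with hg_def
  have hf' : ∀ t : ℝ, HasDerivAt f (v t (f t)) t := fun t => (hCs t).prodMk (hSn t)
  have hg' : ∀ t : ℝ, HasDerivAt g (v t (g t)) t := by
    intro t
    have hinner : HasDerivAt (fun θ : ℝ => 2 * a - θ) (-1) t := by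
      simpa using (hasDerivAt_id t).const_sub (2 * a)
    have hc : HasDerivAt (fun θ : ℝ => ε * Cs (2 * a - θ)) (ε * Sn (2 * a - t)) t := by
      have := ((hCs (2 * a - t)).comp t hinner).const_mul ε
      exact this.congr_deriv (by ring)
    have hs2 : HasDerivAt (fun θ : ℝ => -(ε * Sn (2 * a - θ)))
        (ε * Cs (2 * a - t) ^ n) t := by
      have := (((hSn (2 * a - t)).comp t hinner).const_mul ε).neg
      exact this.congr_deriv (by ring)
    have hseq : (ε * Cs (2 * a - t)) ^ n = ε * Cs (2 * a - t) ^ n := by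
      rcases hε with h | h
      · simp [h]
      · subst h
        rw [neg_one_mul, neg_one_mul, Odd.neg_pow ⟨l - 1, by omega⟩]
    have := hc.prodMk hs2
    convert this using 2 <;> simp [hv_def, hg_def, hseq]
  have hmem_f : ∀ t : ℝ, f t ∈ s t := fun t => habs t
  have hmem_g : ∀ t : ℝ, g t ∈ s t := by
    intro t
    simp only [hg_def, hs_def, mem_setOf_eq, abs_mul, hεabs, one_mul]
    exact habs _
  have heq0 : f a = g a := by
    have : (2 : ℝ) * a - a = a := by ring
    simp only [hf_def, hg_def, this]
    exact Prod.ext h1.symm h2.symm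
  have hlo : min θ a - 1 < a := by rcases le_total θ a with h | h <;> simp [min_eq_left, min_eq_right, h] <;> linarith [min_le_right θ a]
  have hhi : a < max θ a + 1 := by linarith [le_max_right θ a]
  have key := ODE_solution_unique_of_mem_Ioo (fun t _ => hv t) (t₀ := a)
    (a := min θ a - 1) (b := max θ a + 1) ⟨hlo, hhi⟩
    (f := f) (g := g)
    (fun t _ => ⟨hf' t, hmem_f t⟩) (fun t _ => ⟨hg' t, hmem_g t⟩) heq0
  have hθ : f θ = g θ := key ⟨by linarith [min_le_left θ a], by linarith [le_max_left θ a]⟩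
  have c1 := congrArg Prod.fst hθ
  have c2 := congrArg Prod.snd hθ
  simp only [hf_def, hg_def] at c1 c2
  exact ⟨c1.symm, c2.symm⟩


theorem GTaux.exists_zero {l : ℕ} {Cs Sn : ℝ → ℝ}
    (hCs : ∀ θ : ℝ, HasDerivAt Cs (-(Sn θ)) θ)
    (hSn : ∀ θ : ℝ, HasDerivAt Sn (Cs θ ^ (2 * l - 1)) θ)
    (hCs0 : Cs 0 = 1) (hSn0 : Sn 0 = 0) (hl : 2 ≤ l) :
    ∃ T : ℝ, 0 < T ∧ Cs T = 0 ∧ ∀ θ ∈ Ico (0 : ℝ) T, 0 < Cs θ := by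
  have contC : Continuous Cs := by
    rw [continuous_iff_continuousAt]; exact fun x => (hCs x).continuousAt
  have contS : Continuous Sn := by
    rw [continuous_iff_continuousAt]; exact fun x => (hSn x).continuousAt
  -- there is some positive zero
  have hA : ∃ x : ℝ, 0 < x ∧ Cs x = 0 := by
    by_contra hcon
    push_neg at hcon
    have hpos : ∀ x : ℝ, 0 ≤ x → 0 < Cs x := by
      intro x hx
      rcases eq_or_lt_of_le hx with rfl | hx'
      · rw [hCs0]; norm_num
      by_contra hle
      push_neg at hle
      have h0 : (0:ℝ) ∈ Icc (Cs x) (Cs 0) := by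
        constructor
        · exact le_trans hle (le_of_eq rfl) |>.trans (le_refl _) |>.trans (le_refl _)
        · rw [hCs0]; norm_num
      have := intermediate_value_Icc' hx'.le contC.continuousOn h0
      obtain ⟨z, hz, hz0⟩ := this
      rcases eq_or_lt_of_le hz.1 with rfl | hzpos
      · rw [hCs0] at hz0; norm_num at hz0
      · exact hcon z hzpos hz0
    -- Sn 1 > 0
    have hSnmono : MonotoneOn Sn (Ici (0:ℝ)) := by
      apply monotoneOn_of_deriv_nonneg (convex_Ici 0) contS.continuousOn
        (fun x _ => (hSn x).differentiableAt.differentiableWithinAt)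
      intro x hx
      rw [interior_Ici] at hx
      rw [(hSn x).deriv]
      exact le_of_lt (pow_pos (hpos x hx.le) _)
    have hS1 : 0 < Sn 1 := by
      have hfc : ∫ t in (0:ℝ)..1, Cs t ^ (2 * l - 1) = Sn 1 - Sn 0 :=
        intervalIntegral.integral_eq_sub_of_hasDerivAt (fun t _ => hSn t)
          ((contC.pow _).intervalIntegrable 0 1)
      rw [hSn0, sub_zero] at hfc
      rw [← hfc]
      apply intervalIntegral.intervalIntegral_pos_of_pos_on
        ((contC.pow _).intervalIntegrable 0 1) _ one_pos
      intro x hx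
      exact pow_pos (hpos x hx.1.le) _
    -- Cs decreases linearly for x ≥ 1
    have hanti : AntitoneOn (fun x => Cs x + Sn 1 * x) (Ici (1:ℝ)) := by
      apply antitoneOn_of_deriv_nonpos (convex_Ici 1)
        (contC.add (continuous_const.mul continuous_id)).continuousOn
      · intro x _
        exact ((hCs x).add ((hasDerivAt_id x).const_mul (Sn 1))).differentiableAt.differentiableWithinAt
      · intro x hx
        rw [interior_Ici] at hx
        rw [show deriv (Cs + (fun x => Sn 1) * id) x = -Sn x + Sn 1 * 1 from
          ((hCs x).add ((hasDerivAt_id x).const_mul (Sn 1))).deriv]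
        have : Sn 1 ≤ Sn x := hSnmono (by norm_num) (by simp; linarith [(mem_Ioi.mp hx).le]) (mem_Ioi.mp hx).le
        simp only [mul_one]
        linarith
    obtain ⟨X, hX⟩ : ∃ X : ℝ, X = 1 + (Cs 1 + 1) / Sn 1 := ⟨_, rfl⟩
    have hX1 : 1 ≤ X := by
      have h1 : 0 < Cs 1 + 1 := by linarith [hpos 1 zero_le_one]
      have : 0 ≤ (Cs 1 + 1) / Sn 1 := le_of_lt (div_pos h1 hS1)
      linarith
    have := hanti (mem_Ici.mpr le_rfl) (mem_Ici.mpr hX1) hX1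
    have hCsX : Cs X + Sn 1 * X ≤ Cs 1 + Sn 1 * 1 := this
    have hSnX : Sn 1 * X = Sn 1 + (Cs 1 + 1) := by
      rw [hX]; field_simp
    have : Cs X ≤ -1 := by
      rw [hSnX] at hCsX; linarith
    linarith [hpos X (by linarith : (0:ℝ) ≤ X)]
  -- first zero
  obtain ⟨x₀, hx₀, hx₀0⟩ := hA
  set S : Set ℝ := {x | 0 ≤ x ∧ Cs x = 0} with hS
  have hSne : S.Nonempty := ⟨x₀, hx₀.le, hx₀0⟩
  have hSbdd : BddBelow S := ⟨0, fun x hx => hx.1⟩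
  have hSclosed : IsClosed S :=
    (isClosed_le continuous_const continuous_id).inter (isClosed_eq contC continuous_const)
  set T : ℝ := sInf S with hT
  have hTS : T ∈ S := hSclosed.csInf_mem hSne hSbdd
  have hT0 : 0 < T := by
    rcases eq_or_lt_of_le hTS.1 with h | h
    · exfalso
      have h2 := hTS.2
      rw [← h, hCs0] at h2
      norm_num at h2
    · exact h
  refine ⟨T, hT0, hTS.2, ?_⟩
  intro θ hθ
  by_contra hle
  push_neg at hle
  have hne : Cs θ ≠ 0 := by
    intro h
    have : T ≤ θ := csInf_le hSbdd ⟨hθ.1, h⟩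
    linarith [hθ.2]
  have hlt : Cs θ < 0 := lt_of_le_of_ne hle hne
  have h0 : (0:ℝ) ∈ Icc (Cs θ) (Cs 0) := ⟨hlt.le, by rw [hCs0]; norm_num⟩
  obtain ⟨z, hz, hz0⟩ := intermediate_value_Icc' hθ.1 contC.continuousOn h0
  have : T ≤ z := csInf_le hSbdd ⟨hz.1, hz0⟩
  linarith [hz.2, hθ.2]


theorem GTaux.pointwise {l : ℕ} (hl : 2 ≤ l) {c s : ℝ} (hc : 0 < c) (hs : 0 < s)
    (hE : (l : ℝ) * s ^ 2 + c ^ (2 * l) = 1) (i j : ℕ) :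
    s ^ i * c ^ j = (((2 * l : ℕ) : ℝ) * c ^ (2 * l - 1) * (-s)) *
      (-((1 / (2 * (l : ℝ) ^ (((i : ℝ) + 1) / 2))) *
        ((c ^ (2 * l)) ^ (((j : ℝ) + 1) / (2 * (l : ℝ)) - 1) *
          (1 - c ^ (2 * l)) ^ (((i : ℝ) + 1) / 2 - 1)))) := by
  have hl0 : (0 : ℝ) < l := by exact_mod_cast (by omega : 0 < l)
  set A : ℝ := ((j : ℝ) + 1) / (2 * (l : ℝ)) with hA
  set B : ℝ := ((i : ℝ) + 1) / 2 with hB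
  have h1c : (1 : ℝ) - c ^ (2 * l) = (l : ℝ) * s ^ 2 := by linarith
  rw [h1c]
  have e1 : ((c ^ (2 * l) : ℝ)) ^ (A - 1) = c ^ (2 * (l : ℝ) * (A - 1)) := by
    rw [← Real.rpow_natCast c (2 * l), ← Real.rpow_mul hc.le]
    push_cast
    ring_nf
  have e2 : ((l : ℝ) * s ^ 2) ^ (B - 1) = (l : ℝ) ^ (B - 1) * s ^ (2 * (B - 1)) := by
    rw [Real.mul_rpow hl0.le (sq_nonneg s), ← Real.rpow_natCast s 2, ← Real.rpow_mul hs.le]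
    norm_num
  rw [e1, e2]
  rw [← Real.rpow_natCast s i, ← Real.rpow_natCast c j, ← Real.rpow_natCast c (2 * l - 1)]
  have hc2l1 : ((2 * l - 1 : ℕ) : ℝ) = 2 * (l : ℝ) - 1 := by
    rw [Nat.cast_sub (by omega)]
    push_cast
    ring
  rw [hc2l1]
  have hA2 : 2 * (l : ℝ) * A = (j : ℝ) + 1 := by
    rw [hA]; field_simp
  have hB2 : 2 * B = (i : ℝ) + 1 := by
    rw [hB]; ring_nf
  have ec : (j : ℝ) = (2 * (l : ℝ) - 1) + 2 * (l : ℝ) * (A - 1) := by nlinarith [hA2]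
  have es : (i : ℝ) = 1 + 2 * (B - 1) := by linarith [hB2]
  rw [ec, es]
  rw [Real.rpow_add hs, Real.rpow_add hc, Real.rpow_one]
  rw [Real.rpow_sub hl0, Real.rpow_one]
  have hpB : (0:ℝ) < (l : ℝ) ^ B := Real.rpow_pos_of_pos hl0 B
  push_cast
  field_simp

theorem GTaux.subst {l : ℕ} {Cs Sn : ℝ → ℝ} {T : ℝ}
    (hCs : ∀ θ : ℝ, HasDerivAt Cs (-(Sn θ)) θ)
    (hSn : ∀ θ : ℝ, HasDerivAt Sn (Cs θ ^ (2 * l - 1)) θ)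
    (hCs0 : Cs 0 = 1) (hSn0 : Sn 0 = 0) (hl : 2 ≤ l)
    (hE : ∀ θ : ℝ, (l : ℝ) * Sn θ ^ 2 + Cs θ ^ (2 * l) = 1)
    (hT0 : 0 < T) (hCsT : Cs T = 0) (hpos : ∀ θ ∈ Ico (0 : ℝ) T, 0 < Cs θ)
    (i j : ℕ) {θ₁ θ₂ : ℝ} (h₁ : θ₁ ∈ Ioo 0 T) (h₂ : θ₂ ∈ Ioo 0 T) :
    ∫ θ in θ₁..θ₂, Sn θ ^ i * Cs θ ^ j =
      (1 / (2 * (l : ℝ) ^ (((i : ℝ) + 1) / 2))) *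
        ∫ t in (Cs θ₂ ^ (2 * l))..(Cs θ₁ ^ (2 * l)),
          t ^ (((j : ℝ) + 1) / (2 * (l : ℝ)) - 1) * (1 - t) ^ (((i : ℝ) + 1) / 2 - 1) := by
  have contC : Continuous Cs := by
    rw [continuous_iff_continuousAt]; exact fun x => (hCs x).continuousAt
  have contS : Continuous Sn := by
    rw [continuous_iff_continuousAt]; exact fun x => (hSn x).continuousAt
  -- Sn positive on (0, T]
  have snpos : ∀ θ ∈ Ioc (0 : ℝ) T, 0 < Sn θ := by
    intro θ hθ
    have hfc : ∫ t in (0:ℝ)..θ, Cs t ^ (2 * l - 1) = Sn θ - Sn 0 :=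
      intervalIntegral.integral_eq_sub_of_hasDerivAt (fun t _ => hSn t)
        ((contC.pow _).intervalIntegrable 0 θ)
    rw [hSn0, sub_zero] at hfc
    rw [← hfc]
    apply intervalIntegral.intervalIntegral_pos_of_pos_on
      ((contC.pow _).intervalIntegrable 0 θ) _ hθ.1
    intro x hx
    exact pow_pos (hpos x ⟨hx.1.le, lt_of_lt_of_le hx.2 hθ.2⟩) _
  -- Cs strictly decreasing on [0, T]
  have csanti : StrictAntiOn Cs (Icc 0 T) := by
    apply strictAntiOn_of_deriv_neg (convex_Icc 0 T) contC.continuousOn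
    intro x hx
    rw [interior_Icc] at hx
    rw [(hCs x).deriv]
    have := snpos x ⟨hx.1, hx.2.le⟩
    linarith
  have csless : ∀ θ ∈ Ioc (0 : ℝ) T, Cs θ < 1 := by
    intro θ hθ
    have := csanti ⟨le_rfl, hT0.le⟩ ⟨hθ.1.le, hθ.2⟩ hθ.1
    rwa [hCs0] at this
  -- the interval [[θ₁, θ₂]] sits inside (0, T)
  have huIcc : uIcc θ₁ θ₂ ⊆ Ioo 0 T :=
    (Set.ordConnected_Ioo).uIcc_subset h₁ h₂
  set f : ℝ → ℝ := fun θ => Cs θ ^ (2 * l) with hf_def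
  set f' : ℝ → ℝ := fun θ => ((2 * l : ℕ) : ℝ) * Cs θ ^ (2 * l - 1) * (-(Sn θ)) with hf'_def
  set g : ℝ → ℝ := fun t =>
    -((1 / (2 * (l : ℝ) ^ (((i : ℝ) + 1) / 2))) *
      (t ^ (((j : ℝ) + 1) / (2 * (l : ℝ)) - 1) * (1 - t) ^ (((i : ℝ) + 1) / 2 - 1))) with hg_def
  have hderiv : ∀ x ∈ uIcc θ₁ θ₂, HasDerivAt f (f' x) x := fun x _ => (hCs x).pow (2 * l)
  have hcont' : ContinuousOn f' (uIcc θ₁ θ₂) :=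
    ((continuous_const.mul (contC.pow _)).mul contS.neg).continuousOn
  have himage : f '' (uIcc θ₁ θ₂) ⊆ Ioo 0 1 := by
    rintro - ⟨x, hx, rfl⟩
    have hx' := huIcc hx
    have hc0 : 0 < Cs x := hpos x ⟨hx'.1.le, hx'.2⟩
    have hc1 : Cs x < 1 := csless x ⟨hx'.1, hx'.2.le⟩
    exact ⟨pow_pos hc0 _, pow_lt_one₀ hc0.le hc1 (by omega)⟩
  have hgcont : ContinuousOn g (f '' (uIcc θ₁ θ₂)) := by
    apply ContinuousOn.mono ?_ himage
    apply ContinuousOn.neg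
    apply ContinuousOn.mul continuousOn_const
    apply ContinuousOn.mul
    · intro t ht
      exact (Real.continuousAt_rpow_const _ _ (Or.inl ht.1.ne')).continuousWithinAt
    · intro t ht
      have : ContinuousAt (fun t : ℝ => (1 - t) ^ (((i : ℝ) + 1) / 2 - 1)) t := by
        have h1t : (1 : ℝ) - t ≠ 0 := by
          have := ht.2; intro h; rw [sub_eq_zero] at h; linarith
        exact (Real.continuousAt_rpow_const _ _ (Or.inl h1t)).comp
          ((continuous_const.sub continuous_id).continuousAt)
      exact this.continuousWithinAt
  have hsub := intervalIntegral.integral_comp_smul_deriv' hderiv hcont' hgcont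
  have heqint : EqOn (fun θ => Sn θ ^ i * Cs θ ^ j) (fun θ => f' θ • (g ∘ f) θ) (uIcc θ₁ θ₂) := by
    intro θ hθ
    have hθ' := huIcc hθ
    have hc0 : 0 < Cs θ := hpos θ ⟨hθ'.1.le, hθ'.2⟩
    have hs0 : 0 < Sn θ := snpos θ ⟨hθ'.1, hθ'.2.le⟩
    simp only [smul_eq_mul, Function.comp, hf'_def, hg_def, hf_def]
    exact GTaux.pointwise hl hc0 hs0 (hE θ) i j
  rw [intervalIntegral.integral_congr heqint, hsub]
  simp only [hg_def, hf_def]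
  rw [intervalIntegral.integral_neg, intervalIntegral.integral_const_mul]
  rw [intervalIntegral.integral_symm (Cs θ₁ ^ (2 * l)) (Cs θ₂ ^ (2 * l))]
  ring

theorem GTaux.key {l : ℕ} {Cs Sn : ℝ → ℝ} {T : ℝ}
    (hCs : ∀ θ : ℝ, HasDerivAt Cs (-(Sn θ)) θ)
    (hSn : ∀ θ : ℝ, HasDerivAt Sn (Cs θ ^ (2 * l - 1)) θ)
    (hCs0 : Cs 0 = 1) (hSn0 : Sn 0 = 0) (hl : 2 ≤ l)
    (hE : ∀ θ : ℝ, (l : ℝ) * Sn θ ^ 2 + Cs θ ^ (2 * l) = 1)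
    (hT0 : 0 < T) (hCsT : Cs T = 0) (hpos : ∀ θ ∈ Ico (0 : ℝ) T, 0 < Cs θ)
    (i j : ℕ) :
    ∫ θ in (0 : ℝ)..T, Sn θ ^ i * Cs θ ^ j =
      (1 / (2 * (l : ℝ) ^ (((i : ℝ) + 1) / 2))) *
        (Real.Gamma (((j : ℝ) + 1) / (2 * (l : ℝ))) * Real.Gamma (((i : ℝ) + 1) / 2) /
          Real.Gamma (((j : ℝ) + 1) / (2 * (l : ℝ)) + ((i : ℝ) + 1) / 2)) := by
  have hl0 : (0 : ℝ) < l := by exact_mod_cast (by omega : 0 < l)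
  have contC : Continuous Cs := by
    rw [continuous_iff_continuousAt]; exact fun x => (hCs x).continuousAt
  have contS : Continuous Sn := by
    rw [continuous_iff_continuousAt]; exact fun x => (hSn x).continuousAt
  have contF : Continuous fun θ => Sn θ ^ i * Cs θ ^ j := (contS.pow i).mul (contC.pow j)
  -- positivity facts
  have snpos : ∀ θ ∈ Ioc (0 : ℝ) T, 0 < Sn θ := by
    intro θ hθ
    have hfc : ∫ t in (0:ℝ)..θ, Cs t ^ (2 * l - 1) = Sn θ - Sn 0 :=
      intervalIntegral.integral_eq_sub_of_hasDerivAt (fun t _ => hSn t)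
        ((contC.pow _).intervalIntegrable 0 θ)
    rw [hSn0, sub_zero] at hfc
    rw [← hfc]
    apply intervalIntegral.intervalIntegral_pos_of_pos_on
      ((contC.pow _).intervalIntegrable 0 θ) _ hθ.1
    intro x hx
    exact pow_pos (hpos x ⟨hx.1.le, lt_of_lt_of_le hx.2 hθ.2⟩) _
  have csanti : StrictAntiOn Cs (Icc 0 T) := by
    apply strictAntiOn_of_deriv_neg (convex_Icc 0 T) contC.continuousOn
    intro x hx
    rw [interior_Icc] at hx
    rw [(hCs x).deriv]
    have := snpos x ⟨hx.1, hx.2.le⟩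
    linarith
  have csless : ∀ θ ∈ Ioc (0 : ℝ) T, Cs θ < 1 := by
    intro θ hθ
    have := csanti ⟨le_rfl, hT0.le⟩ ⟨hθ.1.le, hθ.2⟩ hθ.1
    rwa [hCs0] at this
  set A : ℝ := ((j : ℝ) + 1) / (2 * (l : ℝ)) with hA
  set B : ℝ := ((i : ℝ) + 1) / 2 with hB
  have hA0 : 0 < A := by positivity
  have hB0 : 0 < B := by positivity
  set h : ℝ → ℝ := fun t => t ^ (A - 1) * (1 - t) ^ (B - 1) with hh
  obtain ⟨hInt, hVal⟩ := GTaux.realBeta hA0 hB0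
  set K : ℝ := 1 / (2 * (l : ℝ) ^ B) with hK
  set F : ℝ → ℝ := fun y => ∫ t in (0:ℝ)..y, h t with hF
  have hFcont : ContinuousOn F (Icc 0 1) := by
    have := intervalIntegral.continuousOn_primitive_interval' hInt
      (by rw [uIcc_of_le zero_le_one]; exact ⟨le_rfl, zero_le_one⟩)
    rwa [uIcc_of_le zero_le_one] at this
  set φ : ℝ → ℝ := fun θ => Cs θ ^ (2 * l) with hφ
  have hφcont : Continuous φ := contC.pow _
  have hφmem : ∀ θ ∈ Ioo (0:ℝ) T, φ θ ∈ Ioo (0:ℝ) 1 := by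
    intro θ hθ
    have hc0 : 0 < Cs θ := hpos θ ⟨hθ.1.le, hθ.2⟩
    have hc1 : Cs θ < 1 := csless θ ⟨hθ.1, hθ.2.le⟩
    exact ⟨pow_pos hc0 _, pow_lt_one₀ hc0.le hc1 (by omega)⟩
  have hIntSub : ∀ u : ℝ, u ∈ Icc (0:ℝ) 1 → IntervalIntegrable h volume 0 u := by
    intro u hu
    apply hInt.mono_set
    rw [uIcc_of_le zero_le_one, uIcc_of_le hu.1]
    exact Icc_subset_Icc le_rfl hu.2
  have hφT : φ T = 0 := by simp [hφ, hCsT, zero_pow (by omega : 2 * l ≠ 0)]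
  have hφ0 : φ 0 = 1 := by simp [hφ, hCs0]
  -- Step A
  have stepA : ∀ θ₁ ∈ Ioo (0:ℝ) T, ∫ θ in θ₁..T, Sn θ ^ i * Cs θ ^ j = K * F (φ θ₁) := by
    intro θ₁ h₁
    have hmem : Ioo θ₁ T ∈ 𝓝[<] T := Ioo_mem_nhdsLT_of_mem ⟨h₁.2, le_rfl⟩
    have t1 : Tendsto (fun θ₂ => ∫ θ in θ₁..θ₂, Sn θ ^ i * Cs θ ^ j) (𝓝[<] T)
        (𝓝 (∫ θ in θ₁..T, Sn θ ^ i * Cs θ ^ j)) :=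
      ((intervalIntegral.continuous_primitive
        (fun a b => contF.intervalIntegrable a b) θ₁).tendsto T).mono_left nhdsWithin_le_nhds
    have tphi : Tendsto φ (𝓝[<] T) (𝓝[Icc 0 1] (0:ℝ)) := by
      apply tendsto_nhdsWithin_of_tendsto_nhds_of_eventually_within
      · have := (hφcont.tendsto T).mono_left (nhdsWithin_le_nhds (s := Iio T))
        rwa [hφT] at this
      · apply mem_of_superset hmem
        intro θ hθ
        have := hφmem θ ⟨lt_trans h₁.1 hθ.1, hθ.2⟩
        exact ⟨this.1.le, this.2.le⟩
    have tF : Tendsto (fun θ₂ => F (φ θ₂)) (𝓝[<] T) (𝓝 (F 0)) :=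
      (hFcont 0 ⟨le_rfl, zero_le_one⟩).tendsto.comp tphi
    have t2 : Tendsto (fun θ₂ => K * (F (φ θ₁) - F (φ θ₂))) (𝓝[<] T)
        (𝓝 (K * (F (φ θ₁) - F 0))) :=
      tendsto_const_nhds.mul (tendsto_const_nhds.sub tF)
    have evEq : (fun θ₂ => ∫ θ in θ₁..θ₂, Sn θ ^ i * Cs θ ^ j) =ᶠ[𝓝[<] T]
        (fun θ₂ => K * (F (φ θ₁) - F (φ θ₂))) := by
      filter_upwards [hmem] with θ₂ hθ₂
      have h₂ : θ₂ ∈ Ioo (0:ℝ) T := ⟨lt_trans h₁.1 hθ₂.1, hθ₂.2⟩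
      have := GTaux.subst hCs hSn hCs0 hSn0 hl hE hT0 hCsT hpos i j h₁ h₂
      rw [this]
      have hsub : F (φ θ₁) - F (φ θ₂) = ∫ t in (φ θ₂)..(φ θ₁), h t := by
        apply intervalIntegral.integral_interval_sub_left
        · exact hIntSub _ ⟨(hφmem θ₁ h₁).1.le, (hφmem θ₁ h₁).2.le⟩
        · exact hIntSub _ ⟨(hφmem θ₂ h₂).1.le, (hφmem θ₂ h₂).2.le⟩
      rw [hsub]
    have t2' := t2.congr' evEq.symm
    have := tendsto_nhds_unique t1 t2'
    rw [this]
    have hF0 : F 0 = 0 := intervalIntegral.integral_same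
    rw [hF0, sub_zero]
  -- Step B
  have t1' : Tendsto (fun θ₁ => ∫ θ in θ₁..T, Sn θ ^ i * Cs θ ^ j) (𝓝[>] (0:ℝ))
      (𝓝 (∫ θ in (0:ℝ)..T, Sn θ ^ i * Cs θ ^ j)) := by
    have hc : Continuous fun y => ∫ θ in y..T, Sn θ ^ i * Cs θ ^ j := by
      have hc2 : Continuous fun y => -∫ θ in T..y, Sn θ ^ i * Cs θ ^ j :=
        (intervalIntegral.continuous_primitive
          (fun a b => contF.intervalIntegrable a b) T).neg
      convert hc2 using 2 with y
      rw [intervalIntegral.integral_symm]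
    exact (hc.tendsto 0).mono_left nhdsWithin_le_nhds
  have hmem0 : Ioo (0:ℝ) T ∈ 𝓝[>] (0:ℝ) := Ioo_mem_nhdsGT_of_mem ⟨le_rfl, hT0⟩
  have tphi0 : Tendsto φ (𝓝[>] (0:ℝ)) (𝓝[Icc 0 1] (1:ℝ)) := by
    apply tendsto_nhdsWithin_of_tendsto_nhds_of_eventually_within
    · have := (hφcont.tendsto 0).mono_left (nhdsWithin_le_nhds (s := Ioi (0:ℝ)))
      rwa [hφ0] at this
    · apply mem_of_superset hmem0
      intro θ hθ
      have := hφmem θ hθ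
      exact ⟨this.1.le, this.2.le⟩
  have tF0 : Tendsto (fun θ₁ => K * F (φ θ₁)) (𝓝[>] (0:ℝ)) (𝓝 (K * F 1)) :=
    tendsto_const_nhds.mul ((hFcont 1 ⟨zero_le_one, le_rfl⟩).tendsto.comp tphi0)
  have evEq0 : (fun θ₁ => ∫ θ in θ₁..T, Sn θ ^ i * Cs θ ^ j) =ᶠ[𝓝[>] (0:ℝ)]
      (fun θ₁ => K * F (φ θ₁)) := by
    filter_upwards [hmem0] with θ₁ h₁
    exact stepA θ₁ h₁
  have final := tendsto_nhds_unique t1' (tF0.congr' evEq0.symm)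
  rw [final]
  have hF1 : F 1 = Real.Gamma A * Real.Gamma B / Real.Gamma (A + B) := hVal
  rw [hF1]

/-- The period Ω of the generalized trigonometric functions with p = 1, q = l. -/
noncomputable def Omega (l : ℕ) : ℝ :=
  2 * (l : ℝ) ^ (-(1 / 2 : ℝ)) * Real.Gamma (1 / 2) * Real.Gamma (1 / (2 * (l : ℝ))) /
    Real.Gamma (1 / 2 + 1 / (2 * (l : ℝ)))

/-- Lemma 2.1 (vi): if i and j are even then
∫_0^Ω Sn^i · Cs^j dθ = (2/l^{(i+1)/2}) · Γ((i+1)/2) · Γ((j+1)/(2l)) / Γ((i+1)/2 + (j+1)/(2l)). -/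
theorem integral_SnCs_even (l : ℕ) (hl : 2 ≤ l) (Cs Sn : ℝ → ℝ)
    (hCs : ∀ θ : ℝ, HasDerivAt Cs (-(Sn θ)) θ)
    (hSn : ∀ θ : ℝ, HasDerivAt Sn (Cs θ ^ (2 * l - 1)) θ)
    (hCs0 : Cs 0 = 1) (hSn0 : Sn 0 = 0)
    (i j : ℕ) (hi : Even i) (hj : Even j) :
    ∫ θ in (0 : ℝ)..(Omega l), Sn θ ^ i * Cs θ ^ j =
      2 / (l : ℝ) ^ (((i : ℝ) + 1) / 2) * Real.Gamma (((i : ℝ) + 1) / 2) *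
        Real.Gamma (((j : ℝ) + 1) / (2 * (l : ℝ))) /
        Real.Gamma (((i : ℝ) + 1) / 2 + ((j : ℝ) + 1) / (2 * (l : ℝ))) := by
  have hl0 : (0 : ℝ) < l := by exact_mod_cast (by omega : 0 < l)
  have hE := GTaux.energy hCs hSn hCs0 hSn0 hl
  obtain ⟨T, hT0, hCsT, hpos⟩ := GTaux.exists_zero hCs hSn hCs0 hSn0 hl
  have contC : Continuous Cs := by
    rw [continuous_iff_continuousAt]; exact fun x => (hCs x).continuousAt
  have contS : Continuous Sn := by
    rw [continuous_iff_continuousAt]; exact fun x => (hSn x).continuousAt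
  have contF : Continuous fun θ => Sn θ ^ i * Cs θ ^ j := (contS.pow i).mul (contC.pow j)
  have hkey := GTaux.key hCs hSn hCs0 hSn0 hl hE hT0 hCsT hpos
  -- T = Ω/4
  have hT' : T = 1 / (2 * (l : ℝ) ^ ((1:ℝ) / 2)) *
      (Real.Gamma (1 / (2 * (l : ℝ))) * Real.Gamma ((1:ℝ) / 2) /
        Real.Gamma (1 / (2 * (l : ℝ)) + (1:ℝ) / 2)) := by
    have h00 := hkey 0 0
    simp only [pow_zero, one_mul, Nat.cast_zero, zero_add] at h00
    rw [intervalIntegral.integral_const, smul_eq_mul, mul_one, sub_zero] at h00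
    convert h00 using 3 <;> norm_num
  have hΩ : Omega l = 4 * T := by
    rw [Omega, hT']
    rw [Real.rpow_neg (Nat.cast_nonneg l)]
    rw [add_comm (1 / (2 * (l : ℝ))) ((1:ℝ)/2)]
    have hpB : (0:ℝ) < (l : ℝ) ^ ((1:ℝ)/2) := Real.rpow_pos_of_pos hl0 _
    field_simp
    ring
  -- reflections
  have r1 := GTaux.reflect hCs hSn hE hl (Or.inr rfl) (a := T)
    (by rw [hCsT]; ring) (by ring)
  have hSn2T : Sn (2 * T) = 0 := by
    have h := (r1 0).2
    simp only [sub_zero] at h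
    rw [hSn0] at h
    linarith
  have r2 := GTaux.reflect hCs hSn hE hl (Or.inl rfl) (a := 2 * T)
    (one_mul _) (by rw [hSn2T]; ring)
  have hint : ∀ u v : ℝ, IntervalIntegrable (fun θ => Sn θ ^ i * Cs θ ^ j) volume u v :=
    fun u v => contF.intervalIntegrable u v
  -- reflection identities for the integrand
  have hF2 : ∀ x : ℝ, Sn (2 * (2*T) - x) ^ i * Cs (2 * (2*T) - x) ^ j
      = Sn x ^ i * Cs x ^ j := by
    intro x
    have hc : Cs (2 * (2*T) - x) = Cs x := by have := (r2 x).1; rwa [one_mul] at this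
    have hs : Sn (2 * (2*T) - x) = -Sn x := by
      have := (r2 x).2
      rw [one_mul] at this
      linarith
    rw [hc, hs, hi.neg_pow]
  have hF1 : ∀ x : ℝ, Sn (2 * T - x) ^ i * Cs (2 * T - x) ^ j = Sn x ^ i * Cs x ^ j := by
    intro x
    have hc : Cs (2 * T - x) = -Cs x := by
      have := (r1 x).1
      linarith
    have hs : Sn (2 * T - x) = Sn x := by
      have := (r1 x).2
      linarith
    rw [hc, hs, hj.neg_pow]
  -- fold the interval
  have s1 : ∫ θ in (2*T)..(4*T), Sn θ ^ i * Cs θ ^ j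
      = ∫ θ in (0:ℝ)..(2*T), Sn θ ^ i * Cs θ ^ j := by
    have e := intervalIntegral.integral_comp_sub_left
      (a := 0) (b := 2*T) (fun θ => Sn θ ^ i * Cs θ ^ j) (2 * (2*T))
    rw [intervalIntegral.integral_congr (g := fun θ => Sn θ ^ i * Cs θ ^ j)
      (fun x _ => hF2 x)] at e
    have h1 : 2 * (2*T) - 2*T = 2*T := by ring
    have h2 : 2 * (2*T) - 0 = 4*T := by ring
    rw [h1, h2] at e
    exact e.symm
  have s2 : ∫ θ in T..(2*T), Sn θ ^ i * Cs θ ^ j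
      = ∫ θ in (0:ℝ)..T, Sn θ ^ i * Cs θ ^ j := by
    have e := intervalIntegral.integral_comp_sub_left
      (a := 0) (b := T) (fun θ => Sn θ ^ i * Cs θ ^ j) (2 * T)
    rw [intervalIntegral.integral_congr (g := fun θ => Sn θ ^ i * Cs θ ^ j)
      (fun x _ => hF1 x)] at e
    have h1 : 2 * T - T = T := by ring
    have h2 : 2 * T - 0 = 2*T := by ring
    rw [h1, h2] at e
    exact e.symm
  have a1 : ∫ θ in (0:ℝ)..(4*T), Sn θ ^ i * Cs θ ^ j
      = (∫ θ in (0:ℝ)..(2*T), Sn θ ^ i * Cs θ ^ j)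
        + ∫ θ in (2*T)..(4*T), Sn θ ^ i * Cs θ ^ j :=
    (intervalIntegral.integral_add_adjacent_intervals (hint _ _) (hint _ _)).symm
  have a2 : ∫ θ in (0:ℝ)..(2*T), Sn θ ^ i * Cs θ ^ j
      = (∫ θ in (0:ℝ)..T, Sn θ ^ i * Cs θ ^ j)
        + ∫ θ in T..(2*T), Sn θ ^ i * Cs θ ^ j :=
    (intervalIntegral.integral_add_adjacent_intervals (hint _ _) (hint _ _)).symm
  have total : ∫ θ in (0:ℝ)..(4*T), Sn θ ^ i * Cs θ ^ j
      = 4 * ∫ θ in (0:ℝ)..T, Sn θ ^ i * Cs θ ^ j := by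
    rw [a1, a2, s1, s2, a2, s2]
    ring
  rw [hΩ, total, hkey i j]
  rw [add_comm (((i:ℝ) + 1) / 2) (((j:ℝ) + 1) / (2 * (l:ℝ)))]
  ring
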